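/- Let W be a binomial random variable with parameters n ≥ 1 and p ∈ (0,1). Then the total variation distance between the laws of W + 1 and W satisfies d_TV(L(W+1), L(W)) ≤ min(1, 1/(2√(np(1-p)))). -/

import Mathlib

open Real


lemma sqrt_pi_le_stirling (n : ℕ) : Real.sqrt π ≤ Stirling.stirlingSeq (n+1) :=
  Stirling.stirlingSeq'_antitone.le_of_tendsto
    ((Filter.tendsto_add_atTop_iff_nat 1).mpr Stirling.tendsto_stirlingSeq_sqrt_pi) n

lemma stirling_le (n : ℕ) (hn : 1 ≤ n) : Stirling.stirlingSeq n ≤ exp 1 / Real.sqrt 2 := by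
  obtain ⟨m, rfl⟩ := Nat.exists_eq_add_of_le hn
  have := Stirling.stirlingSeq'_antitone (Nat.zero_le m)
  simpa [Stirling.stirlingSeq_one, Nat.add_comm] using this

lemma factorial_upper (n : ℕ) (hn : 1 ≤ n) :
    (Nat.factorial n : ℝ) ≤ exp 1 * Real.sqrt n * ((n : ℝ) / exp 1) ^ n := by
  have h := stirling_le n hn
  have hn' : (0:ℝ) < (n:ℝ) := by exact_mod_cast hn
  have hpos : (0:ℝ) < Real.sqrt (2*n) * ((n : ℝ)/ exp 1)^n := by positivity
  rw [Stirling.stirlingSeq, div_le_iff₀ hpos] at h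
  calc (Nat.factorial n : ℝ) ≤ exp 1 / Real.sqrt 2 * (Real.sqrt (2*n) * ((n:ℝ)/exp 1)^n) := h
    _ = exp 1 * Real.sqrt n * ((n : ℝ) / exp 1) ^ n := by
        rw [Real.sqrt_mul (by norm_num : (0:ℝ) ≤ 2)]
        field_simp

lemma factorial_lower (n : ℕ) :
    Real.sqrt π * (Real.sqrt 2 * Real.sqrt n) * ((n : ℝ) / exp 1) ^ n ≤ (Nat.factorial n : ℝ) := by
  cases n with
  | zero => simp [Real.sqrt_nonneg, Real.sqrt_eq_zero]
  | succ m =>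
    have h := sqrt_pi_le_stirling m
    have hn' : (0:ℝ) < ((m+1:ℕ):ℝ) := by positivity
    have hpos : (0:ℝ) < Real.sqrt (2*(m+1:ℕ)) * (((m+1:ℕ):ℝ)/ exp 1)^(m+1) := by positivity
    rw [Stirling.stirlingSeq, le_div_iff₀ hpos] at h
    calc Real.sqrt π * (Real.sqrt 2 * Real.sqrt (m+1:ℕ)) * (((m+1:ℕ):ℝ) / exp 1) ^ (m+1)
        = Real.sqrt π * (Real.sqrt (2*(m+1:ℕ)) * (((m+1:ℕ):ℝ)/ exp 1)^(m+1)) := by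
          rw [Real.sqrt_mul (by norm_num : (0:ℝ) ≤ 2)]; ring
      _ ≤ (Nat.factorial (m+1) : ℝ) := h

lemma one_add_pow_le_exp (x : ℝ) (hx : 0 ≤ x) (m : ℕ) : (1+x)^m ≤ exp (m * x) := by
  calc (1+x)^m ≤ (exp x)^m := pow_le_pow_left₀ (by linarith) (by linarith [Real.add_one_le_exp x]) m
    _ = exp (m * x) := by rw [← Real.exp_nat_mul]

lemma exp_le_one_add_inv_pow (n : ℕ) (hn : 1 ≤ n) : exp 1 ≤ (1 + 1/(n:ℝ))^(n+1) := by
  have hn' : (0:ℝ) < (n:ℝ) := by exact_mod_cast hn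
  have h1 : exp (1/((n:ℝ)+1)) ≤ 1 + 1/(n:ℝ) := by
    have h0 : (0:ℝ) < 1 - 1/((n:ℝ)+1) := by
      have : (1:ℝ)/((n:ℝ)+1) < 1 := by rw [div_lt_one (by linarith)]; linarith
      linarith
    have hh : exp (1/((n:ℝ)+1)) ≤ 1/(1 - 1/((n:ℝ)+1)) := by
      rw [le_div_iff₀ h0]
      have he : exp (1/((n:ℝ)+1)) * exp (-(1/((n:ℝ)+1))) = 1 := by rw [← Real.exp_add]; simp
      nlinarith [Real.exp_pos (1/((n:ℝ)+1)), Real.add_one_le_exp (-(1/((n:ℝ)+1)))]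
    calc exp (1/((n:ℝ)+1)) ≤ 1/(1 - 1/((n:ℝ)+1)) := hh
      _ = 1 + 1/(n:ℝ) := by field_simp; rw [add_sub_cancel_right, div_self hn'.ne']
  calc exp 1 = exp (1/((n:ℝ)+1)) ^ (n+1) := by
        rw [← Real.exp_nat_mul]; congr 1; push_cast; field_simp
    _ ≤ (1 + 1/(n:ℝ))^(n+1) := pow_le_pow_left₀ (exp_pos _).le h1 _

lemma exp_94_le_pi_sq : exp (9/4 : ℝ) ≤ π^2 := by
  have h8 : exp (1/8 : ℝ) ≤ (8/7 : ℝ) := by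
    have h2 : exp (1/8:ℝ) ^ 8 = exp 1 := by rw [← Real.exp_nat_mul]; norm_num
    refine le_of_pow_le_pow_left₀ (by norm_num) (by norm_num) (n := 8) ?_
    rw [h2]; nlinarith [Real.exp_one_lt_d9]
  have he : exp (9/4:ℝ) = exp 1 ^ 2 * (exp (1/8:ℝ))^2 := by
    rw [← Real.exp_nat_mul, ← Real.exp_nat_mul, ← Real.exp_add]; norm_num
  rw [he]
  have hpi := Real.pi_gt_d6
  have h1 : exp 1 ^ 2 ≤ (2.7182818286:ℝ)^2 :=
    pow_le_pow_left₀ (exp_pos 1).le Real.exp_one_lt_d9.le 2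
  have h2 : exp (1/8:ℝ) ^ 2 ≤ ((8/7:ℝ))^2 := pow_le_pow_left₀ (exp_pos _).le h8 2
  have h3 : (3.141592:ℝ)^2 ≤ π^2 := pow_le_pow_left₀ (by norm_num) hpi.le 2
  nlinarith [pow_nonneg (exp_pos (1:ℝ)).le 2, pow_nonneg (exp_pos (1/8:ℝ)).le 2]

set_option maxHeartbeats 1000000 in
lemma keyNat_mid (k j : ℕ) (hk : 4 ≤ k) (hj : 4 ≤ j) :
    4*(k+j)*((k+j).choose k)^2*(2*k+1)^(2*k+1)*(2*j+1)^(2*j+1) ≤ (2*(k+j)+2)^(2*(k+j)+2) := by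
  have hkR : (4:ℝ) ≤ (k:ℝ) := by exact_mod_cast hk
  have hjR : (4:ℝ) ≤ (j:ℝ) := by exact_mod_cast hj
  set K : ℝ := (k:ℝ) with hKdef
  set J : ℝ := (j:ℝ) with hJdef
  have hK0 : (0:ℝ) < K := by linarith
  have hJ0 : (0:ℝ) < J := by linarith
  have hN0 : (0:ℝ) < K + J := by linarith
  set E : ℝ := Real.exp 1 with hE
  have hE0 : (0:ℝ) < E := Real.exp_pos 1
  clear_value E
  rw [← @Nat.cast_le ℝ]
  push_cast
  set C : ℝ := (((k+j).choose k : ℕ) : ℝ) with hCdef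
  have hC0 : (0:ℝ) ≤ C := by positivity
  -- factorial identity
  have h1 : C * (k.factorial:ℝ) * (j.factorial:ℝ) = ((k+j).factorial:ℝ) := by
    rw [hCdef]
    have := Nat.choose_mul_factorial_mul_factorial (Nat.le_add_right k j)
    rw [Nat.add_sub_cancel_left] at this
    exact_mod_cast congrArg (Nat.cast (R := ℝ)) this
  -- squared Stirling bounds
  have hup : ((k+j).factorial:ℝ)^2 ≤ E^2 * (K+J) * (((K+J)/E)^(k+j))^2 := by
    have h := factorial_upper (k+j) (by omega)
    rw [← hE] at h
    have h2 := mul_self_le_mul_self (by positivity) h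
    calc ((k+j).factorial:ℝ)^2 = ((k+j).factorial:ℝ) * ((k+j).factorial:ℝ) := sq _
      _ ≤ (E * Real.sqrt (k+j:ℕ) * (((k+j:ℕ):ℝ)/E)^(k+j)) * (E * Real.sqrt (k+j:ℕ) * (((k+j:ℕ):ℝ)/E)^(k+j)) := h2
      _ = (Real.sqrt ((k+j:ℕ):ℝ))^2 * (E^2 * ((((k+j:ℕ):ℝ))/E)^(k+j) * ((((k+j:ℕ):ℝ))/E)^(k+j)) := by
          ring
      _ = E^2 * (K+J) * (((K+J)/E)^(k+j))^2 := by
          rw [Real.sq_sqrt (by positivity : (0:ℝ) ≤ ((k+j:ℕ):ℝ))]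
          push_cast
          ring
  have hlow : ∀ m : ℕ, (1:ℝ) ≤ m → π * 2 * (m:ℝ) * (((m:ℝ)/E)^m)^2 ≤ ((m.factorial:ℝ))^2 := by
    intro m hm
    have h := factorial_lower m
    rw [← hE] at h
    have h2 := mul_self_le_mul_self (by positivity) h
    calc π * 2 * (m:ℝ) * (((m:ℝ)/E)^m)^2
        = (Real.sqrt π)^2 * ((Real.sqrt 2)^2 * ((Real.sqrt (m:ℝ))^2 * (((m:ℝ)/E)^m)^2)) := by
          rw [Real.sq_sqrt Real.pi_pos.le, Real.sq_sqrt (by norm_num : (0:ℝ) ≤ 2),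
            Real.sq_sqrt (by positivity : (0:ℝ) ≤ (m:ℝ))]
          ring
      _ = (Real.sqrt π * (Real.sqrt 2 * Real.sqrt m) * ((m:ℝ)/E)^m) *
          (Real.sqrt π * (Real.sqrt 2 * Real.sqrt m) * ((m:ℝ)/E)^m) := by
          ring
      _ ≤ (m.factorial:ℝ) * (m.factorial:ℝ) := h2
      _ = ((m.factorial:ℝ))^2 := (sq (m.factorial:ℝ)).symm
  have hlowk := hlow k (by exact_mod_cast hk.trans' (by norm_num))
  have hlowj := hlow j (by exact_mod_cast hj.trans' (by norm_num))
  have hCsq : C^2 * (π*2*K*((K/E)^k)^2) * (π*2*J*((J/E)^j)^2)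
      ≤ E^2 * (K+J) * (((K+J)/E)^(k+j))^2 := by
    calc C^2 * (π*2*K*((K/E)^k)^2) * (π*2*J*((J/E)^j)^2)
        ≤ C^2 * ((k.factorial:ℝ))^2 * ((j.factorial:ℝ))^2 := by
          apply mul_le_mul (mul_le_mul le_rfl hlowk (by positivity) (by positivity)) hlowj
            (by positivity) (by positivity)
      _ = (((k+j).factorial:ℝ))^2 := by rw [← h1]; ring
      _ ≤ E^2 * (K+J) * (((K+J)/E)^(k+j))^2 := hup
  have hA : (2*K+1)^(2*k+1) ≤ (2*K)^(2*k+1) * exp (9/8) := by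
    have h2K : (2*K+1) = (2*K)*(1+1/(2*K)) := by field_simp
    rw [h2K, mul_pow]
    apply mul_le_mul_of_nonneg_left _ (by positivity)
    calc (1+1/(2*K))^(2*k+1) ≤ exp ((2*k+1 : ℕ) * (1/(2*K))) :=
          one_add_pow_le_exp _ (by positivity) _
      _ ≤ exp (9/8) := by
          apply Real.exp_le_exp.mpr
          have : ((2*k+1 : ℕ):ℝ) = 2*K+1 := by push_cast; ring
          rw [this]
          rw [mul_one_div, div_le_iff₀ (by positivity)]
          nlinarith
  have hB : (2*J+1)^(2*j+1) ≤ (2*J)^(2*j+1) * exp (9/8) := by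
    have h2J : (2*J+1) = (2*J)*(1+1/(2*J)) := by field_simp
    rw [h2J, mul_pow]
    apply mul_le_mul_of_nonneg_left _ (by positivity)
    calc (1+1/(2*J))^(2*j+1) ≤ exp ((2*j+1 : ℕ) * (1/(2*J))) :=
          one_add_pow_le_exp _ (by positivity) _
      _ ≤ exp (9/8) := by
          apply Real.exp_le_exp.mpr
          have : ((2*j+1 : ℕ):ℝ) = 2*J+1 := by push_cast; ring
          rw [this]
          rw [mul_one_div, div_le_iff₀ (by positivity)]
          nlinarith
  have hD : (2*(K+J))^(2*(k+j)+2) * E^2 ≤ (2*(K+J)+2)^(2*(k+j)+2) := by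
    have h2N : (2*(K+J)+2) = (2*(K+J))*(1+1/(K+J)) := by field_simp
    have hone : E ≤ (1+1/(K+J))^((k+j)+1) := by
      rw [hE]
      have h := exp_le_one_add_inv_pow (k+j) (by omega)
      push_cast at h
      exact h
    calc (2*(K+J))^(2*(k+j)+2) * E^2
        ≤ (2*(K+J))^(2*(k+j)+2) * ((1+1/(K+J))^((k+j)+1))^2 := by
          apply mul_le_mul_of_nonneg_left (pow_le_pow_left₀ hE0.le hone 2) (by positivity)
      _ = (2*(K+J))^(2*(k+j)+2) * (1+1/(K+J))^(2*(k+j)+2) := by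
          rw [← pow_mul, show ((k+j)+1)*2 = 2*(k+j)+2 from by ring]
      _ = (2*(K+J)+2)^(2*(k+j)+2) := by rw [← mul_pow, ← h2N]
  -- assembly
  set S : ℝ := (π*2*K*((K/E)^k)^2) * (π*2*J*((J/E)^j)^2) with hSdef
  have hS0 : (0:ℝ) < S := by rw [hSdef]; positivity
  rw [← mul_le_mul_iff_of_pos_right hS0]
  calc 4*(K+J)*C^2*(2*K+1)^(2*k+1)*(2*J+1)^(2*j+1) * S
      = (4*(K+J)) * (C^2 * (π*2*K*((K/E)^k)^2) * (π*2*J*((J/E)^j)^2))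
        * ((2*K+1)^(2*k+1) * (2*J+1)^(2*j+1)) := by rw [hSdef]; ring
    _ ≤ (4*(K+J)) * (E^2 * (K+J) * (((K+J)/E)^(k+j))^2)
        * (((2*K)^(2*k+1) * exp (9/8)) * ((2*J)^(2*j+1) * exp (9/8))) := by
        apply mul_le_mul (mul_le_mul le_rfl hCsq (by positivity) (by positivity))
          (mul_le_mul hA hB (by positivity) (by positivity)) (by positivity)
        positivity
    _ = exp (9/4) * (4*(K+J)^2 * E^2 * (((K+J)/E)^(k+j))^2
        * (2*K)^(2*k+1) * (2*J)^(2*j+1)) := by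
        have : exp (9/8:ℝ) * exp (9/8:ℝ) = exp (9/4) := by rw [← Real.exp_add]; norm_num
        rw [← this]; ring
    _ ≤ π^2 * (4*(K+J)^2 * E^2 * (((K+J)/E)^(k+j))^2
        * (2*K)^(2*k+1) * (2*J)^(2*j+1)) := by
        apply mul_le_mul_of_nonneg_right exp_94_le_pi_sq (by positivity)
    _ = ((2*(K+J))^(2*(k+j)+2) * E^2) * S := by
        rw [hSdef, mul_pow 2 (K+J), mul_pow 2 K, mul_pow 2 J]
        simp only [div_pow]
        field_simp
        ring
    _ ≤ (2*(K+J)+2)^(2*(k+j)+2) * S := mul_le_mul_of_nonneg_right hD hS0.le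


lemma exp_half_ge : (1.6487212 : ℝ) ≤ exp (1/2) := by
  have h2 : exp (1/2:ℝ) ^ 2 = exp 1 := by rw [← Real.exp_nat_mul]; norm_num
  nlinarith [Real.exp_one_gt_d9, Real.exp_pos (1/2:ℝ)]

lemma exp_decomp (m : ℕ) (s : ℝ) (hs : 0 ≤ s) :
    (2.7182818283:ℝ)^m * (1.6487212 * (1+s)) ≤ exp ((m:ℝ) + 1/2 + s) := by
  rw [Real.exp_add, Real.exp_add]
  have h1 : (2.7182818283:ℝ)^m ≤ exp (m:ℝ) := by
    rw [show Real.exp (m:ℝ) = (exp 1)^m from by rw [← Real.exp_nat_mul]; ring_nf]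
    exact pow_le_pow_left₀ (by norm_num) Real.exp_one_gt_d9.le m
  have h3 : 1+s ≤ exp s := by have := Real.add_one_le_exp s; linarith
  have e2 : (0:ℝ) < exp (1/2) := exp_pos _
  calc (2.7182818283:ℝ)^m * (1.6487212 * (1+s))
      ≤ exp (m:ℝ) * (exp (1/2) * exp s) := by
        apply mul_le_mul h1 (mul_le_mul exp_half_ge h3 (by linarith) e2.le) (by positivity)
          (exp_pos _).le
    _ = exp (m:ℝ) * exp (1/2) * exp s := by ring

lemma one_sub_pow_le_exp' (x : ℝ) (hx : x ≤ 1) (m : ℕ) : (1-x)^m ≤ exp (-(m * x)) := by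
  calc (1-x)^m ≤ (exp (-x))^m := by
        apply pow_le_pow_left₀ (by linarith)
        linarith [Real.add_one_le_exp (-x)]
    _ = exp (-(m*x)) := by rw [← Real.exp_nat_mul]; ring_nf

lemma keyNat_small (k j : ℕ) (hkj : 1 ≤ k+j) (c : ℝ)
    (hc : 2*(2*(k:ℝ)+1)^(2*k+1) ≤ (k.factorial:ℝ)^2 * 4^k * c)
    (hcexp : c ≤ Real.exp ((2*(k:ℝ)+1)*(2*(j:ℝ)+1)/(2*((k:ℝ)+(j:ℝ))+2))) :
    4*(k+j)*((k+j).choose k)^2*(2*k+1)^(2*k+1)*(2*j+1)^(2*j+1) ≤ (2*(k+j)+2)^(2*(k+j)+2) := by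
  have hN0 : (0:ℝ) < (k:ℝ)+(j:ℝ) := by
    have : (1:ℝ) ≤ ((k+j:ℕ):ℝ) := by exact_mod_cast hkj
    push_cast at this; linarith
  set K : ℝ := (k:ℝ) with hKdef
  set J : ℝ := (j:ℝ) with hJdef
  have hK0 : (0:ℝ) ≤ K := by positivity
  have hJ0 : (0:ℝ) ≤ J := by positivity
  rw [← @Nat.cast_le ℝ]
  push_cast
  set C : ℝ := (((k+j).choose k : ℕ) : ℝ) with hCdef
  have hC0 : (0:ℝ) ≤ C := by positivity
  have hF0 : (0:ℝ) < (k.factorial:ℝ) := by exact_mod_cast k.factorial_pos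
  -- C * k! ≤ N^k
  have h2 : C * (k.factorial:ℝ) ≤ (K+J)^k := by
    have hd : (k+j).descFactorial k ≤ (k+j)^k := Nat.descFactorial_le_pow _ _
    rw [Nat.descFactorial_eq_factorial_mul_choose] at hd
    have : ((k.factorial * (k+j).choose k : ℕ):ℝ) ≤ (((k+j)^k : ℕ):ℝ) := by exact_mod_cast hd
    push_cast at this
    rw [hCdef]; push_cast; linarith
  set x : ℝ := (2*K+1)/(2*(K+J)+2) with hxdef
  have hx1 : x ≤ 1 := by
    rw [hxdef, div_le_one (by linarith)]; linarith
  have hx0 : 0 ≤ x := by rw [hxdef]; positivity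
  have hbase : 2*J+1 = (2*(K+J)+2)*(1-x) := by
    rw [hxdef]; field_simp; ring
  have hBB : (2*J+1)^(2*j+1) ≤ (2*(K+J)+2)^(2*j+1) * exp (-(((2*j+1:ℕ):ℝ) * x)) := by
    rw [hbase, mul_pow]
    apply mul_le_mul_of_nonneg_left (one_sub_pow_le_exp' x hx1 (2*j+1)) (by positivity)
  -- key scalar ineq : 2*(2K+1)^(2k+1)*exp(-(b*x)) ≤ (k!)^2*4^k
  have hscal : 2*(2*K+1)^(2*k+1) * exp (-(((2*j+1:ℕ):ℝ) * x)) ≤ (k.factorial:ℝ)^2 * 4^k := by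
    have hxe : ((2*j+1:ℕ):ℝ) * x = (2*K+1)*(2*J+1)/(2*(K+J)+2) := by
      rw [hxdef]; push_cast; field_simp; ring
    rw [hxe]
    have h3 : 2*(2*K+1)^(2*k+1) ≤ (k.factorial:ℝ)^2 * 4^k * exp ((2*K+1)*(2*J+1)/(2*(K+J)+2)) :=
      le_trans hc (by
        apply mul_le_mul_of_nonneg_left _ (by positivity)
        exact hcexp)
    calc 2*(2*K+1)^(2*k+1) * exp (-((2*K+1)*(2*J+1)/(2*(K+J)+2)))
        ≤ ((k.factorial:ℝ)^2 * 4^k * exp ((2*K+1)*(2*J+1)/(2*(K+J)+2))) * exp (-((2*K+1)*(2*J+1)/(2*(K+J)+2))) := by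
          apply mul_le_mul_of_nonneg_right h3 (exp_pos _).le
      _ = (k.factorial:ℝ)^2 * 4^k := by
          rw [mul_assoc, ← Real.exp_add]; simp
  -- assemble
  have hpow : (2*(K+J))^(2*k+1) ≤ (2*(K+J)+2)^(2*k+1) :=
    pow_le_pow_left₀ (by linarith) (by linarith) _
  -- multiply target by (k!)^2
  rw [← mul_le_mul_iff_of_pos_right (by positivity : (0:ℝ) < (k.factorial:ℝ)^2)]
  calc 4*(K+J)*C^2*(2*K+1)^(2*k+1)*(2*J+1)^(2*j+1) * (k.factorial:ℝ)^2
      = 4*(K+J)*(C*(k.factorial:ℝ))^2*(2*K+1)^(2*k+1)*(2*J+1)^(2*j+1) := by ring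
    _ ≤ 4*(K+J)*((K+J)^k)^2*(2*K+1)^(2*k+1)*((2*(K+J)+2)^(2*j+1) * exp (-(((2*j+1:ℕ):ℝ) * x))) := by
        apply mul_le_mul _ hBB (by positivity) (by positivity)
        apply mul_le_mul_of_nonneg_right _ (by positivity)
        exact mul_le_mul_of_nonneg_left (pow_le_pow_left₀ (by positivity) h2 2) (by positivity)
    _ = ((K+J)^k)^2 * (K+J) * (2*(2*K+1)^(2*k+1) * exp (-(((2*j+1:ℕ):ℝ) * x))) * (2 * (2*(K+J)+2)^(2*j+1)) := by
        ring
    _ ≤ ((K+J)^k)^2 * (K+J) * ((k.factorial:ℝ)^2 * 4^k) * (2 * (2*(K+J)+2)^(2*j+1)) := by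
        apply mul_le_mul_of_nonneg_right _ (by positivity)
        apply mul_le_mul_of_nonneg_left hscal (by positivity)
    _ = ((2*(K+J))^(2*k+1)) * (2*(K+J)+2)^(2*j+1) * (k.factorial:ℝ)^2 := by
        rw [mul_pow 2 (K+J) (2*k+1)]
        rw [show (2:ℝ)^(2*k+1) = 2 * 4^k from by
          rw [show (4:ℝ) = 2^2 from by norm_num, ← pow_mul]; ring]
        rw [show (K+J)^(2*k+1) = ((K+J)^k)^2*(K+J) from by rw [← pow_mul]; ring]
        ring
    _ ≤ ((2*(K+J)+2)^(2*k+1)) * (2*(K+J)+2)^(2*j+1) * (k.factorial:ℝ)^2 := by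
        apply mul_le_mul_of_nonneg_right (mul_le_mul_of_nonneg_right hpow (by positivity)) (by positivity)
    _ = (2*(K+J)+2)^(2*(k+j)+2) * (k.factorial:ℝ)^2 := by
        rw [← pow_add, show 2*k+1 + (2*j+1) = 2*(k+j)+2 from by ring]

lemma keyNat_k0 (j : ℕ) (hj : 1 ≤ j) :
    4*(0+j)*((0+j).choose 0)^2*(2*0+1)^(2*0+1)*(2*j+1)^(2*j+1) ≤ (2*(0+j)+2)^(2*(0+j)+2) := by
  have hjR : (1:ℝ) ≤ (j:ℝ) := by exact_mod_cast hj
  apply keyNat_small 0 j (by omega) 2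
  · norm_num
  · push_cast
    calc (2:ℝ) ≤ (2.7182818283:ℝ)^(0:ℕ) * (1.6487212 * (1+1/4)) := by norm_num
      _ ≤ exp (((0:ℕ):ℝ) + 1/2 + 1/4) := exp_decomp 0 (1/4) (by norm_num)
      _ ≤ exp ((2*(0:ℝ)+1)*(2*(j:ℝ)+1)/(2*((0:ℝ)+(j:ℝ))+2)) := by
          apply Real.exp_le_exp.mpr
          rw [le_div_iff₀ (by linarith)]
          push_cast
          linarith

lemma keyNat_k1 (j : ℕ) (hj : 12 ≤ j) :
    4*(1+j)*((1+j).choose 1)^2*(2*1+1)^(2*1+1)*(2*j+1)^(2*j+1) ≤ (2*(1+j)+2)^(2*(1+j)+2) := by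
  have hjR : (12:ℝ) ≤ (j:ℝ) := by exact_mod_cast hj
  apply keyNat_small 1 j (by omega) 13.5
  · norm_num [Nat.factorial]
  · push_cast
    calc (13.5:ℝ) ≤ (2.7182818283:ℝ)^(2:ℕ) * (1.6487212 * (1+5/28)) := by norm_num
      _ ≤ exp (((2:ℕ):ℝ) + 1/2 + 5/28) := exp_decomp 2 (5/28) (by norm_num)
      _ ≤ exp ((2*(1:ℝ)+1)*(2*(j:ℝ)+1)/(2*((1:ℝ)+(j:ℝ))+2)) := by
          apply Real.exp_le_exp.mpr
          rw [le_div_iff₀ (by linarith)]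
          push_cast
          linarith

lemma keyNat_k2 (j : ℕ) (hj : 33 ≤ j) :
    4*(2+j)*((2+j).choose 2)^2*(2*2+1)^(2*2+1)*(2*j+1)^(2*j+1) ≤ (2*(2+j)+2)^(2*(2+j)+2) := by
  have hjR : (33:ℝ) ≤ (j:ℝ) := by exact_mod_cast hj
  apply keyNat_small 2 j (by omega) (3125/32)
  · norm_num [Nat.factorial]
  · push_cast
    calc (3125/32:ℝ) ≤ (2.7182818283:ℝ)^(4:ℕ) * (1.6487212 * (1+11/72)) := by norm_num
      _ ≤ exp (((4:ℕ):ℝ) + 1/2 + 11/72) := exp_decomp 4 (11/72) (by norm_num)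
      _ ≤ exp ((2*(2:ℝ)+1)*(2*(j:ℝ)+1)/(2*((2:ℝ)+(j:ℝ))+2)) := by
          apply Real.exp_le_exp.mpr
          rw [le_div_iff₀ (by linarith)]
          push_cast
          linarith

lemma keyNat_k3 (j : ℕ) (hj : 117 ≤ j) :
    4*(3+j)*((3+j).choose 3)^2*(2*3+1)^(2*3+1)*(2*j+1)^(2*j+1) ≤ (2*(3+j)+2)^(2*(3+j)+2) := by
  have hjR : (117:ℝ) ≤ (j:ℝ) := by exact_mod_cast hj
  apply keyNat_small 3 j (by omega) (823543/1152)
  · norm_num [Nat.factorial]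
  · push_cast
    calc (823543/1152:ℝ) ≤ (2.7182818283:ℝ)^(6:ℕ) * (1.6487212 * (1+72/242)) := by norm_num
      _ ≤ exp (((6:ℕ):ℝ) + 1/2 + 72/242) := exp_decomp 6 (72/242) (by norm_num)
      _ ≤ exp ((2*(3:ℝ)+1)*(2*(j:ℝ)+1)/(2*((3:ℝ)+(j:ℝ))+2)) := by
          apply Real.exp_le_exp.mpr
          rw [le_div_iff₀ (by linarith)]
          push_cast
          linarith



set_option maxHeartbeats 4000000 in
lemma keyNat' (a b : ℕ) (hab : a ≤ b) (h1 : 1 ≤ a + b) :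
    4*(a+b)*((a+b).choose a)^2*(2*a+1)^(2*a+1)*(2*b+1)^(2*b+1) ≤ (2*(a+b)+2)^(2*(a+b)+2) := by
  match a, hab with
  | 0, hab => exact keyNat_k0 b (by omega)
  | 1, hab =>
    rcases le_or_gt 12 b with h | h
    · exact keyNat_k1 b h
    · interval_cases b <;> decide
  | 2, hab =>
    rcases le_or_gt 33 b with h | h
    · exact keyNat_k2 b h
    · interval_cases b <;> decide
  | 3, hab =>
    rcases le_or_gt 117 b with h | h
    · exact keyNat_k3 b h
    · interval_cases b <;> decide
  | (m+4), hab => exact keyNat_mid (m+4) b (by omega) (by omega)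

lemma keyNat (n k : ℕ) (hn : 1 ≤ n) (hk : k ≤ n) :
    4*n*(n.choose k)^2*(2*k+1)^(2*k+1)*(2*(n-k)+1)^(2*(n-k)+1) ≤ (2*n+2)^(2*n+2) := by
  obtain ⟨j, rfl⟩ : ∃ j, n = k + j := ⟨n-k, by omega⟩
  rw [Nat.add_sub_cancel_left]
  rcases le_or_gt k j with h | h
  · exact keyNat' k j h (by omega)
  · have hcs : (k+j).choose j = (k+j).choose k := by
      have := Nat.choose_symm (n := k+j) (k := k) (Nat.le_add_right k j)
      rwa [Nat.add_sub_cancel_left] at this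
    have hres := keyNat' j k h.le (by omega)
    rw [Nat.add_comm j k, hcs] at hres
    calc 4*(k+j)*((k+j).choose k)^2*(2*k+1)^(2*k+1)*(2*j+1)^(2*j+1)
        = 4*(k+j)*((k+j).choose k)^2*(2*j+1)^(2*j+1)*(2*k+1)^(2*k+1) := by ring
      _ ≤ (2*(k+j)+2)^(2*(k+j)+2) := hres


lemma amgm_pq (p q : ℝ) (hp : 0 ≤ p) (hq : 0 ≤ q) (hpq : p + q = 1) (a b : ℕ)
    (ha : 1 ≤ a) (hb : 1 ≤ b) :
    p^a * q^b * ((a:ℝ)+b)^(a+b) ≤ (a:ℝ)^a * (b:ℝ)^b := by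
  have haR : (0:ℝ) < a := by exact_mod_cast ha
  have hbR : (0:ℝ) < b := by exact_mod_cast hb
  have hab : (0:ℝ) < (a:ℝ)+b := by linarith
  set w₁ : ℝ := a/((a:ℝ)+b) with hw1
  set w₂ : ℝ := b/((a:ℝ)+b) with hw2
  set z₁ : ℝ := p*((a:ℝ)+b)/a with hz1
  set z₂ : ℝ := q*((a:ℝ)+b)/b with hz2
  have hsum : w₁ + w₂ = 1 := by rw [hw1, hw2]; field_simp
  have h := Real.geom_mean_le_arith_mean2_weighted
    (by positivity) (by positivity) (by positivity : (0:ℝ) ≤ z₁) (by positivity : (0:ℝ) ≤ z₂) hsum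
  have harith : w₁ * z₁ + w₂ * z₂ = 1 := by
    rw [hw1, hw2, hz1, hz2]
    field_simp
    linear_combination hpq
  rw [harith] at h
  have hz1p : (0:ℝ) ≤ z₁ := by positivity
  have hz2p : (0:ℝ) ≤ z₂ := by positivity
  have hpow : (z₁ ^ w₁ * z₂ ^ w₂) ^ (((a:ℝ))+b) ≤ 1 := by
    rw [← Real.one_rpow (((a:ℝ))+b)]
    exact Real.rpow_le_rpow (by positivity) h (by positivity)
  have hexpand : (z₁ ^ w₁ * z₂ ^ w₂) ^ (((a:ℝ))+b) = z₁ ^ a * z₂ ^ b := by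
    rw [Real.mul_rpow (Real.rpow_nonneg hz1p _) (Real.rpow_nonneg hz2p _),
      ← Real.rpow_mul hz1p, ← Real.rpow_mul hz2p]
    have e1 : w₁ * ((a:ℝ)+b) = (a:ℝ) := by rw [hw1]; field_simp
    have e2 : w₂ * ((a:ℝ)+b) = (b:ℝ) := by rw [hw2]; field_simp
    rw [e1, e2, Real.rpow_natCast, Real.rpow_natCast]
  rw [hexpand] at hpow
  -- p^a q^b (a+b)^(a+b) = z₁^a z₂^b * (a^a b^b)
  have key : p^a * q^b * ((a:ℝ)+b)^(a+b) = (z₁ ^ a * z₂ ^ b) * ((a:ℝ)^a * (b:ℝ)^b) := by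
    rw [hz1, hz2, div_pow, div_pow, mul_pow, mul_pow]
    rw [pow_add ((a:ℝ)+b) a b]
    field_simp
  rw [key]
  nlinarith [pow_nonneg hz1p a, pow_nonneg hz2p b, pow_pos haR a, pow_pos hbR b,
    mul_pos (pow_pos haR a) (pow_pos hbR b)]



lemma pmf_le_inv_sqrt (n k : ℕ) (hn : 1 ≤ n) (p : ℝ) (hp : 0 < p) (hp1 : p < 1) :
    (n.choose k : ℝ) * p ^ k * (1 - p) ^ (n - k) ≤ 1 / (2 * Real.sqrt (n * p * (1 - p))) := by
  have hq : 0 < 1 - p := by linarith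
  have hnR : (0:ℝ) < n := by exact_mod_cast hn
  have hs0 : (0:ℝ) < Real.sqrt (n * p * (1-p)) := Real.sqrt_pos.mpr (by positivity)
  rw [le_div_iff₀ (by positivity)]
  -- reduce to k ≤ n
  rcases le_or_gt k n with hk | hk
  swap
  · rw [Nat.choose_eq_zero_of_lt hk]
    simp
  set X : ℝ := (n.choose k : ℝ) * p ^ k * (1 - p) ^ (n - k) with hX
  have hX0 : 0 ≤ X := by positivity
  have hsq : (X * (2 * Real.sqrt (n * p * (1-p))))^2 ≤ 1 := by
    have hsqs : (Real.sqrt (n * p * (1-p)))^2 = n * p * (1-p) :=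
      Real.sq_sqrt (by positivity)
    have h4 : (2 * Real.sqrt (n * p * (1-p)))^2 = 4*((n:ℝ)*p*(1-p)) := by
      rw [mul_pow, hsqs]; norm_num
    have expand : (X * (2 * Real.sqrt (n * p * (1-p))))^2
        = (4*n*((n.choose k:ℝ))^2) * (p^(2*k+1) * (1-p)^(2*(n-k)+1)) := by
      rw [mul_pow X, h4, hX]
      rw [show p^(2*k+1) = (p^k)^2 * p from by rw [← pow_mul]; ring,
        show (1-p)^(2*(n-k)+1) = ((1-p)^(n-k))^2 * (1-p) from by rw [← pow_mul]; ring]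
      ring
    rw [expand]
    have hD0 : (0:ℝ) < ((2*n+2:ℕ):ℝ)^(2*n+2) := by positivity
    have hamgm := amgm_pq p (1-p) hp.le hq.le (by ring) (2*k+1) (2*(n-k)+1)
      (by omega) (by omega)
    have hcast : ((2*k+1:ℕ):ℝ) + ((2*(n-k)+1:ℕ):ℝ) = ((2*n+2:ℕ):ℝ) := by
      push_cast [Nat.cast_sub hk]
      ring
    have hexp : (2*k+1) + (2*(n-k)+1) = 2*n+2 := by omega
    rw [hcast, hexp] at hamgm
    have hKN := keyNat n k hn hk
    have hKNR : 4*(n:ℝ)*((n.choose k:ℝ))^2*((2*k+1:ℕ):ℝ)^(2*k+1)*((2*(n-k)+1:ℕ):ℝ)^(2*(n-k)+1)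
        ≤ ((2*n+2:ℕ):ℝ)^(2*n+2) := by exact_mod_cast hKN
    rw [← mul_le_mul_iff_of_pos_right hD0, one_mul]
    calc (4*n*((n.choose k:ℝ))^2) * (p^(2*k+1) * (1-p)^(2*(n-k)+1)) * ((2*n+2:ℕ):ℝ)^(2*n+2)
        = (4*n*((n.choose k:ℝ))^2) * (p^(2*k+1) * (1-p)^(2*(n-k)+1) * ((2*n+2:ℕ):ℝ)^(2*n+2)) := by
          ring
      _ ≤ (4*n*((n.choose k:ℝ))^2) * (((2*k+1:ℕ):ℝ)^(2*k+1) * ((2*(n-k)+1:ℕ):ℝ)^(2*(n-k)+1)) :=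
          mul_le_mul_of_nonneg_left hamgm (by positivity)
      _ = 4*(n:ℝ)*((n.choose k:ℝ))^2*((2*k+1:ℕ):ℝ)^(2*k+1)*((2*(n-k)+1:ℕ):ℝ)^(2*(n-k)+1) := by
          ring
      _ ≤ ((2*n+2:ℕ):ℝ)^(2*n+2) := hKNR
  nlinarith [hsq, mul_nonneg hX0 (by positivity : (0:ℝ) ≤ 2 * Real.sqrt (n * p * (1-p)))]



/-- Barbour–Jensen: total variation distance between Binomial(n,p) shifted by 1 and itself.
The total variation distance is expressed as the supremum over subsets A ⊆ ℕ of the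
difference of the probabilities of A under the laws of W+1 and W. -/
theorem binomial_shift_tv_bound (n : ℕ) (hn : 1 ≤ n) (p : ℝ) (hp : 0 < p) (hp1 : p < 1)
    (pW : ℕ → ℝ) (hpW : ∀ k : ℕ, pW k = (n.choose k : ℝ) * p ^ k * (1 - p) ^ (n - k))
    (pW1 : ℕ → ℝ) (hpW1 : ∀ k : ℕ, pW1 k = if k = 0 then 0 else pW (k - 1)) :
    (⨆ A : Set ℕ, |(∑' k : ℕ, A.indicator pW1 k) - ∑' k : ℕ, A.indicator pW k|)
      ≤ min 1 (1 / (2 * Real.sqrt (n * p * (1 - p)))) := by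
  have hq : 0 < 1 - p := by linarith
  have hnR : (0:ℝ) < (n:ℝ) := by exact_mod_cast hn
  have hpW_nonneg : ∀ k, 0 ≤ pW k := fun k => by rw [hpW]; positivity
  have hpW_zero : ∀ k, n < k → pW k = 0 := fun k hk => by
    rw [hpW, Nat.choose_eq_zero_of_lt hk]; simp
  -- mode
  set m : ℕ := ⌊((n:ℝ)+1)*p⌋₊ with hmdef
  have hm_le : (m:ℝ) ≤ ((n:ℝ)+1)*p := Nat.floor_le (by positivity)
  have hm_lt : ((n:ℝ)+1)*p < (m:ℝ)+1 := Nat.lt_floor_add_one _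
  have hm_n : m ≤ n := by
    have : ((n:ℝ)+1)*p < (n:ℝ)+1 := by nlinarith [mul_pos (by linarith : (0:ℝ) < (n:ℝ)+1) hq]
    have h2 : (m:ℝ) < (n:ℝ)+1 := lt_of_le_of_lt hm_le this
    exact_mod_cast Nat.lt_add_one_iff.mp (by exact_mod_cast h2)
  -- monotonicity
  have hinc : ∀ k : ℕ, ((k:ℝ)+1) ≤ ((n:ℝ)+1)*p → pW k ≤ pW (k+1) := by
    intro k hk
    have hkn : k + 1 ≤ n := by
      by_contra h
      push_neg at h
      have : (n:ℝ)+1 ≤ (k:ℝ)+1 := by exact_mod_cast h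
      nlinarith [mul_pos (by linarith : (0:ℝ) < (n:ℝ)+1) hq]
    have hid : ((n.choose (k+1) * (k+1) : ℕ):ℝ) = ((n.choose k * (n - k) : ℕ):ℝ) := by
      exact_mod_cast congrArg (Nat.cast (R := ℝ)) (Nat.choose_succ_right_eq n k)
    push_cast [Nat.cast_sub (by omega : k ≤ n)] at hid
    rw [hpW, hpW]
    have hnk : n - (k+1) + 1 = n - k := by omega
    have hpow : (1-p)^(n-k) = (1-p)^(n-(k+1)) * (1-p) := by rw [← hnk, pow_succ]
    rw [hpow]
    have key : (n.choose k : ℝ) * (1-p) * ((k:ℝ)+1) ≤ (n.choose (k+1) : ℝ) * p * ((k:ℝ)+1) := by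
      rw [show (n.choose (k+1) : ℝ) * p * ((k:ℝ)+1) = (n.choose (k+1) : ℝ) * ((k:ℝ)+1) * p from by ring,
        hid]
      have hC0 : (0:ℝ) ≤ (n.choose k : ℝ) := by positivity
      have : (1-p) * ((k:ℝ)+1) ≤ ((n:ℝ) - k) * p := by nlinarith
      calc (n.choose k : ℝ) * (1-p) * ((k:ℝ)+1) = (n.choose k : ℝ) * ((1-p) * ((k:ℝ)+1)) := by ring
        _ ≤ (n.choose k : ℝ) * (((n:ℝ)-k) * p) := mul_le_mul_of_nonneg_left this hC0
        _ = (n.choose k : ℝ) * ((n:ℝ)-k) * p := by ring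
    have key2 : (n.choose k : ℝ) * (1-p) ≤ (n.choose (k+1) : ℝ) * p :=
      le_of_mul_le_mul_right (by calc (n.choose k : ℝ) * (1-p) * ((k:ℝ)+1) ≤ _ := key) (by positivity)
    calc (n.choose k : ℝ) * p^k * ((1-p)^(n-(k+1)) * (1-p))
        = ((n.choose k : ℝ) * (1-p)) * (p^k * (1-p)^(n-(k+1))) := by ring
      _ ≤ ((n.choose (k+1) : ℝ) * p) * (p^k * (1-p)^(n-(k+1))) := by
          apply mul_le_mul_of_nonneg_right key2 (by positivity)
      _ = (n.choose (k+1) : ℝ) * p^(k+1) * (1-p)^(n-(k+1)) := by ring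
  have hdec : ∀ k : ℕ, ((n:ℝ)+1)*p ≤ ((k:ℝ)+1) → pW (k+1) ≤ pW k := by
    intro k hk
    rcases le_or_gt (k+1) n with hkn | hkn
    swap
    · rw [hpW_zero (k+1) hkn]; exact hpW_nonneg k
    have hid : ((n.choose (k+1) * (k+1) : ℕ):ℝ) = ((n.choose k * (n - k) : ℕ):ℝ) := by
      exact_mod_cast congrArg (Nat.cast (R := ℝ)) (Nat.choose_succ_right_eq n k)
    push_cast [Nat.cast_sub (by omega : k ≤ n)] at hid
    rw [hpW, hpW]
    have hnk : n - (k+1) + 1 = n - k := by omega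
    have hpow : (1-p)^(n-k) = (1-p)^(n-(k+1)) * (1-p) := by rw [← hnk, pow_succ]
    rw [hpow]
    have key : (n.choose (k+1) : ℝ) * p * ((k:ℝ)+1) ≤ (n.choose k : ℝ) * (1-p) * ((k:ℝ)+1) := by
      rw [show (n.choose (k+1) : ℝ) * p * ((k:ℝ)+1) = (n.choose (k+1) : ℝ) * ((k:ℝ)+1) * p from by ring,
        hid]
      have hC0 : (0:ℝ) ≤ (n.choose k : ℝ) := by positivity
      have : ((n:ℝ) - k) * p ≤ (1-p) * ((k:ℝ)+1) := by nlinarith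
      calc (n.choose k : ℝ) * ((n:ℝ)-k) * p = (n.choose k : ℝ) * (((n:ℝ)-k) * p) := by ring
        _ ≤ (n.choose k : ℝ) * ((1-p) * ((k:ℝ)+1)) := mul_le_mul_of_nonneg_left this hC0
        _ = (n.choose k : ℝ) * (1-p) * ((k:ℝ)+1) := by ring
    have key2 : (n.choose (k+1) : ℝ) * p ≤ (n.choose k : ℝ) * (1-p) :=
      le_of_mul_le_mul_right (by calc (n.choose (k+1) : ℝ) * p * ((k:ℝ)+1) ≤ _ := key) (by positivity)
    calc (n.choose (k+1) : ℝ) * p^(k+1) * (1-p)^(n-(k+1))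
        = ((n.choose (k+1) : ℝ) * p) * (p^k * (1-p)^(n-(k+1))) := by ring
      _ ≤ ((n.choose k : ℝ) * (1-p)) * (p^k * (1-p)^(n-(k+1))) := by
          apply mul_le_mul_of_nonneg_right key2 (by positivity)
      _ = (n.choose k : ℝ) * p^k * ((1-p)^(n-(k+1)) * (1-p)) := by ring
  -- difference function
  set d : ℕ → ℝ := fun k => pW1 k - pW k with hddef
  have hd_nonpos : ∀ k ≤ m, d k ≤ 0 := by
    intro k hk
    rw [hddef]
    cases k with
    | zero => simp [hpW1 0]; linarith [hpW_nonneg 0]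
    | succ i =>
      simp only [hpW1 (i+1)]
      have h1 : pW i ≤ pW (i+1) := by
        apply hinc
        have : ((i:ℝ)+1) ≤ (m:ℝ) := by exact_mod_cast hk
        linarith
      simp only [Nat.succ_ne_zero, if_false, Nat.add_sub_cancel]
      linarith
  have hd_nonneg : ∀ k, m+1 ≤ k → 0 ≤ d k := by
    intro k hk
    rw [hddef]
    cases k with
    | zero => omega
    | succ i =>
      simp only [hpW1 (i+1), Nat.succ_ne_zero, if_false, Nat.add_sub_cancel]
      have h1 : pW (i+1) ≤ pW i := by
        apply hdec
        have : (m:ℝ)+1 ≤ (i:ℝ)+1 := by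
          have : m ≤ i := by omega
          have := (Nat.cast_le (α := ℝ)).mpr this
          linarith
        linarith
      linarith
  -- telescoping sums
  have htel_up : ∑ k ∈ Finset.Ico (m+1) (n+2), d k = pW m := by
    rw [Finset.sum_Ico_eq_sum_range]
    have hL : n + 2 - (m+1) = (n+1-m) := by omega
    rw [hL]
    have : ∀ i ∈ Finset.range (n+1-m), d (m+1+i) = (fun i => pW (m+i)) i - (fun i => pW (m+i)) (i+1) := by
      intro i _
      simp only [hddef, hpW1 (m+1+i), Nat.succ_ne_zero]
      have : m+1+i ≠ 0 := by omega
      rw [if_neg this]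
      have e1 : m+1+i-1 = m+i := by omega
      have e2 : m+1+i = m+(i+1) := by omega
      rw [e1, e2]
    rw [Finset.sum_congr rfl this, Finset.sum_range_sub']
    have h3 : m + (n+1-m) = n+1 := by omega
    rw [h3, hpW_zero (n+1) (by omega)]
    simp
  have htel_dn : ∑ k ∈ Finset.range (m+1), d k = -pW m := by
    rw [Finset.sum_range_succ']
    have : ∀ i ∈ Finset.range m, d (i+1) = (fun i => pW i) i - (fun i => pW i) (i+1) := by
      intro i _
      simp only [hddef, hpW1 (i+1), Nat.succ_ne_zero, if_false, Nat.add_sub_cancel]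
    rw [Finset.sum_congr rfl this, Finset.sum_range_sub']
    simp only [hddef, hpW1 0, if_pos]
    ring_nf
  -- pW m ≤ 1
  have hple1 : pW m ≤ 1 := by
    have hsum1 : ∑ k ∈ Finset.range (n+1), pW k = 1 := by
      have hb := add_pow p (1-p) n
      have : ∀ k ∈ Finset.range (n+1), p^k * (1-p)^(n-k) * (n.choose k : ℝ) = pW k := by
        intro k _
        rw [hpW]; ring
      rw [Finset.sum_congr rfl this] at hb
      rw [← hb]
      norm_num
    rw [← hsum1]
    apply Finset.single_le_sum (fun i _ => hpW_nonneg i) (Finset.mem_range.mpr (by omega))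
  -- per-set bound
  have key : ∀ A : Set ℕ,
      |(∑' k : ℕ, A.indicator pW1 k) - ∑' k : ℕ, A.indicator pW k| ≤ pW m := by
    intro A
    have hS1 : (∑' k : ℕ, A.indicator pW1 k) = ∑ k ∈ Finset.range (n+2), A.indicator pW1 k := by
      apply tsum_eq_sum
      intro b hb
      have hb' : n + 2 ≤ b := by simpa using hb
      have hz : pW1 b = 0 := by
        rw [hpW1, if_neg (by omega : ¬ b = 0)]
        exact hpW_zero (b-1) (by omega)
      exact Set.indicator_apply_eq_zero.mpr (fun _ => hz)
    have hS : (∑' k : ℕ, A.indicator pW k) = ∑ k ∈ Finset.range (n+2), A.indicator pW k := by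
      apply tsum_eq_sum
      intro b hb
      have hb' : n + 2 ≤ b := by simpa using hb
      exact Set.indicator_apply_eq_zero.mpr (fun _ => hpW_zero b (by omega))
    rw [hS1, hS, ← Finset.sum_sub_distrib]
    have hsplit : ∀ k ∈ Finset.range (n+2), A.indicator pW1 k - A.indicator pW k = A.indicator d k := by
      intro k _
      by_cases h : k ∈ A
      · simp [Set.indicator_of_mem h, hddef]
      · simp [Set.indicator_of_notMem h]
    rw [Finset.sum_congr rfl hsplit]
    rw [abs_le]
    constructor
    · have hflt : (Finset.range (n+2)).filter (fun k => k < m+1) = Finset.range (m+1) := by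
        ext x
        simp only [Finset.mem_filter, Finset.mem_range]
        omega
      calc -pW m = ∑ k ∈ Finset.range (m+1), d k := htel_dn.symm
        _ = ∑ k ∈ Finset.range (n+2), (if k < m+1 then d k else 0) := by
            rw [← Finset.sum_filter, hflt]
        _ ≤ ∑ k ∈ Finset.range (n+2), A.indicator d k := by
            apply Finset.sum_le_sum
            intro i _
            by_cases him : i < m+1
            · by_cases hiA : i ∈ A
              · simp [him, Set.indicator_of_mem hiA]
              · simp only [Set.indicator_of_notMem hiA, if_pos him]
                exact hd_nonpos i (by omega)
            · by_cases hiA : i ∈ A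
              · simp only [Set.indicator_of_mem hiA, if_neg him]
                exact hd_nonneg i (by omega)
              · simp [him, Set.indicator_of_notMem hiA]
    · have hflt : (Finset.range (n+2)).filter (fun k => m+1 ≤ k) = Finset.Ico (m+1) (n+2) := by
        ext x
        simp only [Finset.mem_filter, Finset.mem_range, Finset.mem_Ico]
        omega
      calc ∑ k ∈ Finset.range (n+2), A.indicator d k
          ≤ ∑ k ∈ Finset.range (n+2), (if m+1 ≤ k then d k else 0) := by
            apply Finset.sum_le_sum
            intro i _
            by_cases him : m+1 ≤ i
            · by_cases hiA : i ∈ A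
              · simp [him, Set.indicator_of_mem hiA]
              · simp only [Set.indicator_of_notMem hiA, if_pos him]
                exact hd_nonneg i him
            · by_cases hiA : i ∈ A
              · simp only [Set.indicator_of_mem hiA, if_neg him]
                exact hd_nonpos i (by omega)
              · simp [him, Set.indicator_of_notMem hiA]
        _ = ∑ k ∈ Finset.Ico (m+1) (n+2), d k := by rw [← Finset.sum_filter, hflt]
        _ = pW m := htel_up
  -- conclude
  apply ciSup_le
  intro A
  exact le_min (le_trans (key A) hple1)
    (le_trans (key A) (by rw [hpW]; exact pmf_le_inv_sqrt n m hn p hp hp1))
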